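/- Consider the semidefinite program inf { Tr[Ω(σ_k ⊗ ρ)] : 0 ≤ Ω ≤ 𝟙, Tr[Ω(Φ⁺_{d_k} ⊗ ρ)] ≥ 1−ε } over Hermitian operators Ω, where σ_k = (1/d_k)Σ_i|ii⟩⟨ii|, Φ⁺_{d_k} is the maximally entangled state of Schmidt rank d_k, ρ is any density operator, and ε ∈ [0,1]. Its optimal value is at least (1−ε)/d_k. -/

import Mathlib

open Matrix
open scoped BigOperators ComplexOrder

noncomputable section

namespace KeyCost

/-- A density operator: positive semidefinite with unit trace. -/
def IsDensity {n : Type*} [Fintype n] (M : Matrix n n ℂ) : Prop :=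
  M.PosSemidef ∧ M.trace = 1

/-- Von Neumann entropy (base 2), via eigenvalues of a Hermitian matrix. -/
noncomputable def vNEntropy {n : Type*} [Fintype n] [DecidableEq n] (M : Matrix n n ℂ) : ℝ :=
  if h : M.IsHermitian then -∑ i, h.eigenvalues i * Real.logb 2 (h.eigenvalues i) else 0

/-- Matrix logarithm (base 2) of a Hermitian matrix via the spectral theorem. -/
noncomputable def matLog {n : Type*} [Fintype n] [DecidableEq n] (M : Matrix n n ℂ) : Matrix n n ℂ :=
  if h : M.IsHermitian then
    (h.eigenvectorUnitary : Matrix n n ℂ) *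
      Matrix.diagonal (fun i => (Real.logb 2 (h.eigenvalues i) : ℂ)) *
      (h.eigenvectorUnitary : Matrix n n ℂ)ᴴ
  else 0

/-- Quantum relative entropy  D(ρ‖σ) = Tr[ρ (log ρ − log σ)]  (base 2). -/
noncomputable def relEnt {n : Type*} [Fintype n] [DecidableEq n] (ρ σ : Matrix n n ℂ) : ℝ :=
  ((ρ * (matLog ρ - matLog σ)).trace).re

/-- Partial trace over the second (Bob's) factor. -/
def ptraceRight {α β : Type*} [Fintype β] (M : Matrix (α × β) (α × β) ℂ) : Matrix α α ℂ :=
  Matrix.of fun a a' => ∑ b, M (a, b) (a', b)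

/-- Tensor (Kronecker) product of two square matrices, on the product index type. -/
def prodMat {α β : Type*} (A : Matrix α α ℂ) (B : Matrix β β ℂ) : Matrix (α × β) (α × β) ℂ :=
  Matrix.of fun p q => A p.1 q.1 * B p.2 q.2

/-- Separability across the `α : β` cut. -/
def IsSeparable {α β : Type*} [Fintype α] [Fintype β] (σ : Matrix (α × β) (α × β) ℂ) : Prop :=
  ∃ (m : ℕ) (p : Fin m → ℝ) (a : Fin m → Matrix α α ℂ) (b : Fin m → Matrix β β ℂ),
    (∀ k, 0 ≤ p k) ∧ (∑ k, p k = 1) ∧ (∀ k, IsDensity (a k)) ∧ (∀ k, IsDensity (b k)) ∧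
    σ = ∑ k, (p k : ℂ) • prodMat (a k) (b k)

/-- Trace norm of a Hermitian matrix (sum of absolute values of eigenvalues). -/
noncomputable def traceNorm {n : Type*} [Fintype n] [DecidableEq n] (M : Matrix n n ℂ) : ℝ :=
  if h : M.IsHermitian then ∑ i, |h.eigenvalues i| else 0

/-- Normalized trace distance (1/2)‖ρ − σ‖₁. -/
noncomputable def traceDist {n : Type*} [Fintype n] [DecidableEq n] (ρ σ : Matrix n n ℂ) : ℝ :=
  (1 / 2) * traceNorm (ρ - σ)

/-- Product Kraus operator E ⊗ F. -/
def locKraus {dA dB dA' dB' : Type*} (E : Matrix dA' dA ℂ) (F : Matrix dB' dB ℂ) :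
    Matrix (dA' × dB') (dA × dB) ℂ :=
  Matrix.of fun p q => E p.1 q.1 * F p.2 q.2

/-- LOCC channel (modelled by its Kraus decomposition into product operators). -/
def IsLOCC {dA dB dA' dB' : Type*} [Fintype dA] [Fintype dB] [Fintype dA'] [Fintype dB']
    [DecidableEq dA] [DecidableEq dB] [DecidableEq dA'] [DecidableEq dB']
    (Λ : Matrix (dA × dB) (dA × dB) ℂ → Matrix (dA' × dB') (dA' × dB') ℂ) : Prop :=
  ∃ (m : ℕ) (E : Fin m → Matrix dA' dA ℂ) (F : Fin m → Matrix dB' dB ℂ),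
    (∑ x, (locKraus (E x) (F x))ᴴ * locKraus (E x) (F x) = 1) ∧
    ∀ ρ, Λ ρ = ∑ x, locKraus (E x) (F x) * ρ * (locKraus (E x) (F x))ᴴ

/-- The Hilbert space of a private state with key dimension `dk` and shield dimension `ds`:
Alice holds `Fin dk × Fin ds`, Bob holds `Fin dk × Fin ds`. -/
abbrev SIRSpace (dk ds : ℕ) := (Fin dk × Fin ds) × (Fin dk × Fin ds)

/-- Strictly irreducible private state
`γ = (1/dk) Σ_{i,j} |ii⟩⟨jj| ⊗ U_i ρS U_j†` with each `U_i ρS U_i†` separable. -/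
def IsSIR {dk ds : ℕ} (γ : Matrix (SIRSpace dk ds) (SIRSpace dk ds) ℂ) : Prop :=
  ∃ (U : Fin dk → Matrix (Fin ds × Fin ds) (Fin ds × Fin ds) ℂ)
    (ρS : Matrix (Fin ds × Fin ds) (Fin ds × Fin ds) ℂ),
    (∀ i, U i ∈ Matrix.unitaryGroup (Fin ds × Fin ds) ℂ) ∧
    IsDensity ρS ∧
    (∀ i, IsSeparable (U i * ρS * (U i)ᴴ)) ∧
    ∀ p q : SIRSpace dk ds,
      γ p q =
        if p.1.1 = p.2.1 ∧ q.1.1 = q.2.1 then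
          (1 / (dk : ℂ)) * (U p.1.1 * ρS * (U q.1.1)ᴴ) (p.1.2, p.2.2) (q.1.2, q.2.2)
        else 0

/-- One-shot key cost. -/
noncomputable def KCone {dA dB : Type*} [Fintype dA] [Fintype dB] [DecidableEq dA] [DecidableEq dB]
    (ε : ℝ) (ρ : Matrix (dA × dB) (dA × dB) ℂ) : ℝ :=
  sInf {r : ℝ | ∃ (dk ds : ℕ) (γ : Matrix (SIRSpace dk ds) (SIRSpace dk ds) ℂ)
      (Λ : Matrix (SIRSpace dk ds) (SIRSpace dk ds) ℂ → Matrix (dA × dB) (dA × dB) ℂ),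
      IsSIR γ ∧ IsLOCC Λ ∧ traceDist (Λ γ) ρ ≤ ε ∧ r = Real.logb 2 dk}

/-- One-shot distillable key. -/
noncomputable def KDone {dA dB : Type*} [Fintype dA] [Fintype dB] [DecidableEq dA] [DecidableEq dB]
    (ε : ℝ) (ρ : Matrix (dA × dB) (dA × dB) ℂ) : ℝ :=
  sSup {r : ℝ | ∃ (dk ds : ℕ) (γ : Matrix (SIRSpace dk ds) (SIRSpace dk ds) ℂ)
      (Λ : Matrix (dA × dB) (dA × dB) ℂ → Matrix (SIRSpace dk ds) (SIRSpace dk ds) ℂ),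
      IsSIR γ ∧ IsLOCC Λ ∧ traceDist (Λ ρ) γ ≤ ε ∧ r = Real.logb 2 dk}

/-- n-fold tensor power of a bipartite state, with the bipartite cut `A^n : B^n`. -/
def powState {dA dB : Type*} [Fintype dA] [Fintype dB]
    (ρ : Matrix (dA × dB) (dA × dB) ℂ) (n : ℕ) :
    Matrix ((Fin n → dA) × (Fin n → dB)) ((Fin n → dA) × (Fin n → dB)) ℂ :=
  Matrix.of fun p q => ∏ i, ρ (p.1 i, p.2 i) (q.1 i, q.2 i)

/-- Asymptotic key cost. -/
noncomputable def KCost {dA dB : Type*} [Fintype dA] [Fintype dB] [DecidableEq dA] [DecidableEq dB]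
    (ρ : Matrix (dA × dB) (dA × dB) ℂ) : ℝ :=
  ⨆ ε ∈ Set.Ioo (0 : ℝ) 1,
    Filter.limsup (fun n : ℕ => KCone ε (powState ρ n) / n) Filter.atTop

/-- Relative entropy of entanglement. -/
noncomputable def ER {α β : Type*} [Fintype α] [Fintype β] [DecidableEq α] [DecidableEq β]
    (ρ : Matrix (α × β) (α × β) ℂ) : ℝ :=
  sInf {x : ℝ | ∃ σ : Matrix (α × β) (α × β) ℂ, IsSeparable σ ∧ x = relEnt ρ σ}

/-- ε-hypothesis-testing relative entropy. -/
noncomputable def Dh {n : Type*} [Fintype n] [DecidableEq n] (ε : ℝ) (ρ σ : Matrix n n ℂ) : ℝ :=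
  -Real.logb 2 (sInf {x : ℝ | ∃ Λ : Matrix n n ℂ, Λ.PosSemidef ∧ (1 - Λ).PosSemidef ∧
      1 - ε ≤ ((Λ * ρ).trace).re ∧ x = ((Λ * σ).trace).re})

/-- A strictly irreducible generalized private state with key-part entropy `h`:
up to local unitaries and index reshuffling it has the canonical twisted form
`Σ_{i,j} √(μ_i μ_j) |e_i f_i⟩⟨e_j f_j| ⊗ U_i ρS U_j†` with separable conditional shields. -/
def IsGSIRwithEnt {dA dB : Type*} [Fintype dA] [Fintype dB] [DecidableEq dA] [DecidableEq dB]
    (γ : Matrix (dA × dB) (dA × dB) ℂ) (h : ℝ) : Prop :=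
  ∃ (k sA sB : ℕ) (eA : dA ≃ Fin k × Fin sA) (eB : dB ≃ Fin k × Fin sB)
    (VA : Matrix dA dA ℂ) (VB : Matrix dB dB ℂ)
    (μ : Fin k → ℝ) (U : Fin k → Matrix (Fin sA × Fin sB) (Fin sA × Fin sB) ℂ)
    (ρS : Matrix (Fin sA × Fin sB) (Fin sA × Fin sB) ℂ),
    VA ∈ Matrix.unitaryGroup dA ℂ ∧ VB ∈ Matrix.unitaryGroup dB ℂ ∧
    (∀ i, 0 ≤ μ i) ∧ (∑ i, μ i = 1) ∧
    (∀ i, U i ∈ Matrix.unitaryGroup (Fin sA × Fin sB) ℂ) ∧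
    IsDensity ρS ∧
    (∀ i, IsSeparable (U i * ρS * (U i)ᴴ)) ∧
    (∀ p q : dA × dB,
      (prodMat VA VB * γ * (prodMat VA VB)ᴴ) p q =
        if (eA p.1).1 = (eB p.2).1 ∧ (eA q.1).1 = (eB q.2).1 then
          (Real.sqrt (μ (eA p.1).1 * μ (eA q.1).1) : ℂ) *
            (U (eA p.1).1 * ρS * (U (eA q.1).1)ᴴ) ((eA p.1).2, (eB p.2).2) ((eA q.1).2, (eB q.2).2)
        else 0) ∧
    h = -∑ i, μ i * Real.logb 2 (μ i)

/-- A strictly irreducible generalized private state. -/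
def IsGSIR {dA dB : Type*} [Fintype dA] [Fintype dB] [DecidableEq dA] [DecidableEq dB]
    (γ : Matrix (dA × dB) (dA × dB) ℂ) : Prop :=
  ∃ h, IsGSIRwithEnt γ h

/-- Key of formation: infimum of the average key-part entropy over finite decompositions
into strictly irreducible generalized private states. -/
noncomputable def KF {dA dB : Type*} [Fintype dA] [Fintype dB] [DecidableEq dA] [DecidableEq dB]
    (ρ : Matrix (dA × dB) (dA × dB) ℂ) : ℝ :=
  sInf {r : ℝ | ∃ (N : ℕ) (p : Fin N → ℝ) (γ : Fin N → Matrix (dA × dB) (dA × dB) ℂ)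
      (h : Fin N → ℝ),
      (∀ k, 0 ≤ p k) ∧ (∑ k, p k = 1) ∧ (∀ k, IsDensity (γ k)) ∧
      (∀ k, IsGSIRwithEnt (γ k) (h k)) ∧ (∑ k, (p k : ℂ) • γ k = ρ) ∧
      r = ∑ k, p k * h k}


/-- The maximally entangled state `Φ⁺ = (1/d) Σ_{i,j} |ii⟩⟨jj|` on `ℂ^d ⊗ ℂ^d`. -/
def maxEnt (d : ℕ) : Matrix (Fin d × Fin d) (Fin d × Fin d) ℂ :=
  Matrix.of fun p q => if p.1 = p.2 ∧ q.1 = q.2 then 1 / (d : ℂ) else 0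

/-- The dephased maximally entangled state `σ = (1/d) Σ_i |ii⟩⟨ii|`. -/
def dephasedMaxEnt (d : ℕ) : Matrix (Fin d × Fin d) (Fin d × Fin d) ℂ :=
  Matrix.of fun p q => if p.1 = p.2 ∧ p = q then 1 / (d : ℂ) else 0

lemma diag_nonneg_of_psd {n : Type*} [Fintype n] [DecidableEq n] {M : Matrix n n ℂ}
    (h : M.PosSemidef) (i : n) : 0 ≤ M i i := by
  exact h.diag_nonneg

lemma trace_nonneg_of_psd {n : Type*} [Fintype n] [DecidableEq n] {M : Matrix n n ℂ}
    (h : M.PosSemidef) : 0 ≤ M.trace :=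
  Finset.sum_nonneg fun i _ => diag_nonneg_of_psd h i

lemma trace_mul_nonneg_of_psd {n : Type*} [Fintype n] [DecidableEq n] {A M : Matrix n n ℂ}
    (hA : A.PosSemidef) (hM : M.PosSemidef) : 0 ≤ ((A * M).trace).re := by
  obtain ⟨B, rfl⟩ : ∃ B : Matrix n n ℂ, M = Bᴴ * B := by
    open MatrixOrder in
    obtain ⟨B, hB⟩ := CStarAlgebra.nonneg_iff_eq_star_mul_self.mp hM.nonneg
    exact ⟨B, hB⟩
  have h1 : (A * (Bᴴ * B)).trace = (B * A * Bᴴ).trace := by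
    rw [Matrix.trace_mul_comm, Matrix.mul_assoc, Matrix.mul_assoc,
      Matrix.trace_mul_comm, Matrix.mul_assoc]
  rw [h1]
  have := trace_nonneg_of_psd (hA.mul_mul_conjTranspose_same B)
  exact (Complex.le_def.mp this).1

lemma prodMat_posSemidef {α β : Type*} [Fintype α] [Fintype β] [DecidableEq α] [DecidableEq β]
    {A : Matrix α α ℂ} {B : Matrix β β ℂ} (hA : A.PosSemidef) (hB : B.PosSemidef) :
    (prodMat A B).PosSemidef := by
  obtain ⟨C, rfl⟩ : ∃ C : Matrix α α ℂ, A = Cᴴ * C := by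
    open MatrixOrder in
    obtain ⟨C, hC⟩ := CStarAlgebra.nonneg_iff_eq_star_mul_self.mp hA.nonneg
    exact ⟨C, hC⟩
  obtain ⟨D, rfl⟩ : ∃ D : Matrix β β ℂ, B = Dᴴ * D := by
    open MatrixOrder in
    obtain ⟨D, hD⟩ := CStarAlgebra.nonneg_iff_eq_star_mul_self.mp hB.nonneg
    exact ⟨D, hD⟩
  have h : prodMat (Cᴴ * C) (Dᴴ * D) = (prodMat C D)ᴴ * (prodMat C D) := by
    ext p q
    simp only [prodMat, Matrix.mul_apply, Matrix.conjTranspose_apply, Matrix.of_apply,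
      Fintype.sum_prod_type, Finset.sum_mul_sum, star_mul']
    apply Finset.sum_congr rfl; intro r _
    apply Finset.sum_congr rfl; intro s _
    ring
  rw [h]
  exact Matrix.posSemidef_conjTranspose_mul_self _

lemma key_psd (d : ℕ) (hd : 1 ≤ d) :
    (dephasedMaxEnt d - ((d : ℂ)⁻¹) • maxEnt d).PosSemidef := by
  have hd0 : (0 : ℝ) < (d : ℝ) := by exact_mod_cast hd
  have hdiagsum : ∀ f : Fin d × Fin d → ℂ,
      (∑ p : Fin d × Fin d, if p.1 = p.2 then f p else 0) = ∑ i, f (i, i) := by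
    intro f
    rw [Fintype.sum_prod_type]
    apply Finset.sum_congr rfl; intro i _
    rw [Finset.sum_ite_eq]
    simp
  refine Matrix.PosSemidef.of_dotProduct_mulVec_nonneg ?_ ?_
  · ext p q
    have e1 : (q.1 = q.2 ∧ q = p) ↔ (p.1 = p.2 ∧ p = q) := by
      constructor <;> rintro ⟨h, rfl⟩ <;> exact ⟨h, rfl⟩
    have e2 : (q.1 = q.2 ∧ p.1 = p.2) ↔ (p.1 = p.2 ∧ q.1 = q.2) := and_comm
    simp only [Matrix.conjTranspose_apply, Matrix.sub_apply, Matrix.smul_apply,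
      dephasedMaxEnt, maxEnt, Matrix.of_apply, smul_eq_mul, star_sub, star_mul',
      apply_ite (star : ℂ → ℂ), star_zero, star_div₀, star_one, star_natCast, star_inv₀]
    rw [if_congr e1 rfl rfl, if_congr e2 rfl rfl]
  · intro x
    have hmv : ∀ p : Fin d × Fin d,
        ((dephasedMaxEnt d - ((d : ℂ)⁻¹) • maxEnt d) *ᵥ x) p
          = if p.1 = p.2 then
              (d : ℂ)⁻¹ * x p - (d : ℂ)⁻¹ * (d : ℂ)⁻¹ * ∑ i, x (i, i) else 0 := by
      intro p
      simp only [mulVec, dotProduct, Matrix.sub_apply, Matrix.smul_apply,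
        dephasedMaxEnt, maxEnt, Matrix.of_apply, smul_eq_mul]
      by_cases h1 : p.1 = p.2
      · simp only [h1, true_and, if_true]
        have : ∀ q : Fin d × Fin d,
            ((if p = q then 1 / (d : ℂ) else 0)
              - (d : ℂ)⁻¹ * (if q.1 = q.2 then 1 / (d : ℂ) else 0)) * x q
            = (if p = q then (d : ℂ)⁻¹ * x q else 0)
              - (if q.1 = q.2 then (d : ℂ)⁻¹ * (d : ℂ)⁻¹ * x q else 0) := by
          intro q
          by_cases hq : p = q <;> by_cases hq2 : q.1 = q.2 <;> simp [hq, hq2, one_div] <;> ring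
        rw [Finset.sum_congr rfl (fun q _ => this q), Finset.sum_sub_distrib,
          Finset.sum_ite_eq, hdiagsum (fun q => (d : ℂ)⁻¹ * (d : ℂ)⁻¹ * x q)]
        simp [Finset.mul_sum]
      · simp only [h1, false_and, if_false]
        apply Finset.sum_eq_zero; intro q _
        simp [h1]
    have hform : dotProduct (star x) ((dephasedMaxEnt d - ((d : ℂ)⁻¹) • maxEnt d) *ᵥ x)
        = (((d : ℝ)⁻¹ * ∑ i, Complex.normSq (x (i, i))
            - (d : ℝ)⁻¹ * (d : ℝ)⁻¹ * Complex.normSq (∑ i, x (i, i))) : ℝ) := by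
      calc dotProduct (star x) ((dephasedMaxEnt d - ((d : ℂ)⁻¹) • maxEnt d) *ᵥ x)
          = ∑ p : Fin d × Fin d, if p.1 = p.2 then
              (starRingEnd ℂ) (x p) *
                ((d : ℂ)⁻¹ * x p - (d : ℂ)⁻¹ * (d : ℂ)⁻¹ * ∑ i, x (i, i)) else 0 := by
            simp only [dotProduct, Pi.star_apply]
            apply Finset.sum_congr rfl; intro p _
            rw [hmv p]
            by_cases h1 : p.1 = p.2 <;> simp [h1, Complex.star_def]
        _ = ∑ i : Fin d, (starRingEnd ℂ) (x (i, i)) *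
              ((d : ℂ)⁻¹ * x (i, i) - (d : ℂ)⁻¹ * (d : ℂ)⁻¹ * ∑ j, x (j, j)) :=
            hdiagsum _
        _ = (d : ℂ)⁻¹ * ∑ i, (starRingEnd ℂ) (x (i, i)) * x (i, i)
              - (d : ℂ)⁻¹ * (d : ℂ)⁻¹ *
                ((∑ i, (starRingEnd ℂ) (x (i, i))) * ∑ j, x (j, j)) := by
            simp only [mul_sub, Finset.sum_sub_distrib, Finset.mul_sum, Finset.sum_mul]
            congr 1
            · apply Finset.sum_congr rfl; intro i _; ring
            · rw [Finset.sum_comm]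
              apply Finset.sum_congr rfl; intro i _
              apply Finset.sum_congr rfl; intro j _
              ring
        _ = _ := by
            rw [← map_sum (starRingEnd ℂ)]
            rw [show ((starRingEnd ℂ) (∑ i, x (i, i))) * (∑ j, x (j, j))
                = (Complex.normSq (∑ i, x (i, i)) : ℂ) by
              rw [mul_comm]; exact Complex.mul_conj _]
            rw [show (∑ i, (starRingEnd ℂ) (x (i, i)) * x (i, i))
                = ((∑ i, Complex.normSq (x (i, i)) : ℝ) : ℂ) by
              push_cast
              apply Finset.sum_congr rfl; intro i _
              rw [mul_comm]; exact Complex.mul_conj _]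
            push_cast
            ring
    rw [hform, Complex.zero_le_real]
    have hy : Complex.normSq (∑ i, x (i, i)) ≤ (d : ℝ) * ∑ i, Complex.normSq (x (i, i)) := by
      have h1 : ‖∑ i, x (i, i)‖ ≤ ∑ i, ‖x (i, i)‖ := by
        simpa using
          norm_sum_le (Finset.univ : Finset (Fin d)) (fun i => x (i, i))
      have h2 : (∑ i, ‖x (i, i)‖) ^ 2
          ≤ (d : ℝ) * ∑ i, (‖x (i, i)‖) ^ 2 := by
        simpa using sq_sum_le_card_mul_sum_sq (s := Finset.univ)
          (f := fun i : Fin d => ‖x (i, i)‖)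
      calc Complex.normSq (∑ i, x (i, i)) = (‖∑ i, x (i, i)‖) ^ 2 := by
            rw [Complex.sq_norm]
        _ ≤ (∑ i, ‖x (i, i)‖) ^ 2 :=
            pow_le_pow_left₀ (norm_nonneg _) h1 2
        _ ≤ (d : ℝ) * ∑ i, (‖x (i, i)‖) ^ 2 := h2
        _ = (d : ℝ) * ∑ i, Complex.normSq (x (i, i)) := by
            congr 1; apply Finset.sum_congr rfl; intro i _; rw [Complex.sq_norm]
    have h3 : (d : ℝ)⁻¹ * (d : ℝ)⁻¹ * Complex.normSq (∑ i, x (i, i))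
        ≤ (d : ℝ)⁻¹ * ∑ i, Complex.normSq (x (i, i)) := by
      rw [mul_assoc]
      apply mul_le_mul_of_nonneg_left _ (inv_nonneg.mpr hd0.le)
      rw [inv_mul_le_iff₀ hd0]
      exact hy
    linarith

/-- any operator `0 ≤ Ω ≤ 𝟙` with `Tr[Ω(Φ⁺_{dk} ⊗ ρ)] ≥ 1−ε` satisfies
`Tr[Ω(σ_k ⊗ ρ)] ≥ (1−ε)/dk`; i.e. the optimal value of the SDP is at least `(1−ε)/dk`. -/
theorem sdp_lower_bound {γt : Type*} [Fintype γt] [DecidableEq γt]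
    (dk : ℕ) (hdk : 1 ≤ dk) (ε : ℝ) (hε : ε ∈ Set.Icc (0 : ℝ) 1)
    (ρ : Matrix γt γt ℂ) (hρ : IsDensity ρ)
    (Ω : Matrix ((Fin dk × Fin dk) × γt) ((Fin dk × Fin dk) × γt) ℂ)
    (hΩ0 : Ω.PosSemidef) (hΩ1 : (1 - Ω).PosSemidef)
    (hcon : 1 - ε ≤ ((Ω * prodMat (maxEnt dk) ρ).trace).re) :
    (1 - ε) / dk ≤ ((Ω * prodMat (dephasedMaxEnt dk) ρ).trace).re := by
  have hd0 : (0 : ℝ) < (dk : ℝ) := by exact_mod_cast hdk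
  have hsplit : prodMat (dephasedMaxEnt dk) ρ
      = prodMat (dephasedMaxEnt dk - ((dk : ℂ)⁻¹) • maxEnt dk) ρ
        + ((dk : ℂ)⁻¹) • prodMat (maxEnt dk) ρ := by
    ext p q
    simp only [prodMat, Matrix.of_apply, Matrix.sub_apply, Matrix.smul_apply, Matrix.add_apply,
      smul_eq_mul]
    ring
  have htr : ((Ω * prodMat (dephasedMaxEnt dk) ρ).trace).re
      = ((Ω * prodMat (dephasedMaxEnt dk - ((dk : ℂ)⁻¹) • maxEnt dk) ρ).trace).re
        + (dk : ℝ)⁻¹ * ((Ω * prodMat (maxEnt dk) ρ).trace).re := by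
    rw [hsplit, Matrix.mul_add, Matrix.trace_add, Complex.add_re, Matrix.mul_smul,
      Matrix.trace_smul, smul_eq_mul]
    congr 1
    rw [show ((dk : ℂ)⁻¹) = (((dk : ℝ)⁻¹ : ℝ) : ℂ) by push_cast; ring]
    exact Complex.re_ofReal_mul _ _
  have h0 : 0 ≤ ((Ω * prodMat (dephasedMaxEnt dk - ((dk : ℂ)⁻¹) • maxEnt dk) ρ).trace).re :=
    trace_mul_nonneg_of_psd hΩ0 (prodMat_posSemidef (key_psd dk hdk) hρ.1)
  have hmul := mul_le_mul_of_nonneg_left hcon (inv_nonneg.mpr hd0.le)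
  rw [htr, div_eq_inv_mul]
  linarith

end KeyCost
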